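/- arXiv:1010.1111 — 3 statements merged into one kernel-verified Lean document; each statement's English description precedes it below -/
import Mathlib

section
/- Let m, p_1, …, p_r, γ₂ be integers with p_1·γ₂ + 1 ≡ 0 (mod m). For integers α, β, set α' = −β and β' = α − γ₂ − 1. Then gcd(m, p_1−1, …, p_r−1, α', β') = gcd(m, p_1−1, …, p_r−1, α, β). -/
open Finset

/-- Let `m, p_1, …, p_r, γ₂` be integers with `p_1·γ₂ + 1 ≡ 0 (mod m)`.  For
integers `α, β`, set `α' = −β` and `β' = α − γ₂ − 1`.  Then
`gcd(m, p_1−1, …, p_r−1, α', β') = gcd(m, p_1−1, …, p_r−1, α, β)`. -/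
theorem stmt_8 (m γ₂ α β : ℤ) (r : ℕ) (hr : 0 < r) (p : Fin r → ℤ)
    (h : p ⟨0, hr⟩ * γ₂ + 1 ≡ 0 [ZMOD m]) :
    GCDMonoid.gcd m (GCDMonoid.gcd (univ.gcd fun i => p i - 1) (GCDMonoid.gcd (-β) (α - γ₂ - 1))) =
      GCDMonoid.gcd m (GCDMonoid.gcd (univ.gcd fun i => p i - 1) (GCDMonoid.gcd α β)) := by
  have hm : m ∣ p ⟨0, hr⟩ * γ₂ + 1 := by
    have := h.dvd
    simpa using this.neg_right
  -- key: any d dividing m and p₀ - 1 divides γ₂ + 1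
  have key : ∀ d : ℤ, d ∣ m → d ∣ (p ⟨0, hr⟩ - 1) → d ∣ γ₂ + 1 := by
    intro d hdm hdp
    have h1 : d ∣ p ⟨0, hr⟩ * γ₂ + 1 := hdm.trans hm
    have h2 : d ∣ (p ⟨0, hr⟩ - 1) * γ₂ := hdp.mul_right γ₂
    have : γ₂ + 1 = (p ⟨0, hr⟩ * γ₂ + 1) - (p ⟨0, hr⟩ - 1) * γ₂ := by ring
    rw [this]
    exact h1.sub h2
  have hp0 : ∀ d : ℤ, d ∣ (univ.gcd fun i => p i - 1) → d ∣ p ⟨0, hr⟩ - 1 := by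
    intro d hd
    exact hd.trans (Finset.gcd_dvd (mem_univ _))
  apply dvd_antisymm_of_normalize_eq (normalize_gcd _ _) (normalize_gcd _ _)
  · have hdm : (GCDMonoid.gcd m (GCDMonoid.gcd (univ.gcd fun i => p i - 1)
        (GCDMonoid.gcd (-β) (α - γ₂ - 1)))) ∣ m := gcd_dvd_left _ _
    have hdg := (gcd_dvd_right m _).trans
      (gcd_dvd_left (univ.gcd fun i => p i - 1) (GCDMonoid.gcd (-β) (α - γ₂ - 1)))
    have hdβ' : _ ∣ -β := (gcd_dvd_right m _).trans (((gcd_dvd_right (univ.gcd fun i => p i - 1) _)).trans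
      (gcd_dvd_left (-β) (α - γ₂ - 1)))
    have hdβ'' : _ ∣ α - γ₂ - 1 := (gcd_dvd_right m _).trans (((gcd_dvd_right (univ.gcd fun i => p i - 1) _)).trans
      (gcd_dvd_right (-β) (α - γ₂ - 1)))
    have hγ := key _ hdm (hp0 _ hdg)
    have hα : GCDMonoid.gcd m (GCDMonoid.gcd (univ.gcd fun i => p i - 1)
        (GCDMonoid.gcd (-β) (α - γ₂ - 1))) ∣ α := by
      have h2 := hdβ''.add hγ
      rwa [show α - γ₂ - 1 + (γ₂ + 1) = α by ring] at h2
    exact dvd_gcd hdm (dvd_gcd hdg (dvd_gcd hα (by simpa using hdβ'.neg_right)))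
  · have hdm : (GCDMonoid.gcd m (GCDMonoid.gcd (univ.gcd fun i => p i - 1)
        (GCDMonoid.gcd α β))) ∣ m := gcd_dvd_left _ _
    have hdg := (gcd_dvd_right m _).trans
      (gcd_dvd_left (univ.gcd fun i => p i - 1) (GCDMonoid.gcd α β))
    have hdα : _ ∣ α := (gcd_dvd_right m _).trans ((gcd_dvd_right (univ.gcd fun i => p i - 1) _).trans (gcd_dvd_left α β))
    have hdβ : _ ∣ β := (gcd_dvd_right m _).trans ((gcd_dvd_right (univ.gcd fun i => p i - 1) _).trans (gcd_dvd_right α β))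
    have hγ := key _ hdm (hp0 _ hdg)
    have hβ' : GCDMonoid.gcd m (GCDMonoid.gcd (univ.gcd fun i => p i - 1)
        (GCDMonoid.gcd α β)) ∣ α - γ₂ - 1 := by
      have h2 := hdα.sub hγ
      rwa [show α - (γ₂ + 1) = α - γ₂ - 1 by ring] at h2
    exact dvd_gcd hdm (dvd_gcd hdg (dvd_gcd hdβ.neg_right hβ'))
end

section
/- Let m ≥ 1 and suppose integers p_1, …, p_r ≥ 2 are coprime to m and satisfy (p_1⋯p_r)·((2g−2) + r − ∑_i (p_1⋯p_r)/p_i / (p_1⋯p_r)) ≡ 0 (mod m), i.e., (p_1⋯p_r)·((2g−2)+r) − ∑_i (p_1⋯p_r)/p_i ≡ 0 (mod m). Then there exist unique n_1, …, n_r ∈ ℤ/mℤ with p_i·n_i + 1 ≡ 0 (mod m), and these satisfy ∑_i n_i ≡ (2−2g) − r (mod m). -/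
open Finset

/-- Let `m ≥ 1` and suppose integers `p i ≥ 2` are coprime to `m` and satisfy the
liftability condition `(p_1⋯p_r)·((2g−2)+r) − ∑_i ∏_{j≠i} p j ≡ 0 (mod m)`.  Then there exist
unique `n i ∈ ℤ/mℤ` with `p i · n i + 1 = 0`, and these satisfy `∑ n i = (2−2g) − r`. -/
theorem stmt_9 (m : ℕ) (hm : 1 ≤ m) (g r : ℕ) (p : Fin r → ℤ) (hp : ∀ i, 2 ≤ p i)
    (hcop : ∀ i, IsCoprime (p i) (m : ℤ))
    (hlift : (∏ i, p i) * ((2 * (g : ℤ) - 2) + r) - ∑ i, ∏ j ∈ univ.erase i, p j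
      ≡ 0 [ZMOD (m : ℤ)]) :
    (∃! n : Fin r → ZMod m, ∀ i, (p i : ZMod m) * n i + 1 = 0) ∧
    ∀ n : Fin r → ZMod m, (∀ i, (p i : ZMod m) * n i + 1 = 0) →
      ∑ i, n i = ((2 - 2 * (g : ℤ) - r : ℤ) : ZMod m) := by
  have hq : ∀ i, IsUnit ((p i : ZMod m)) := by
    intro i
    have h := (hcop i).map (Int.castRingHom (ZMod m))
    simp only [map_intCast, map_natCast, Int.cast_natCast, ZMod.natCast_self,
      isCoprime_zero_right] at h
    simpa using h
  have hkey : (∏ i, (p i : ZMod m)) * (2 * (g : ZMod m) - 2 + r)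
      = ∑ i, ∏ j ∈ univ.erase i, (p j : ZMod m) := by
    have h := (ZMod.intCast_eq_intCast_iff _ _ _).mpr hlift
    push_cast at h
    linear_combination h
  constructor
  · refine ⟨fun i => -(↑(hq i).unit⁻¹ : ZMod m), fun i => ?_, fun n' hn' => ?_⟩
    · linear_combination -(hq i).mul_val_inv
    · funext i
      exact (hq i).mul_left_cancel (by linear_combination hn' i + (hq i).mul_val_inv)
  · intro n hn
    have hPu : IsUnit (∏ i, (p i : ZMod m)) := by
      refine ⟨∏ i, (hq i).unit, ?_⟩
      calc ((∏ i, (hq i).unit : (ZMod m)ˣ) : ZMod m)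
          = ∏ i, ((hq i).unit : ZMod m) := map_prod (Units.coeHom (ZMod m)) _ _
        _ = ∏ i, (p i : ZMod m) := Finset.prod_congr rfl fun i _ => (hq i).unit_spec
    have h2 : ∑ i, ∏ j ∈ univ.erase i, (p j : ZMod m)
        = (∏ i, (p i : ZMod m)) * (-∑ i, n i) := by
      rw [mul_comm, ← Finset.sum_neg_distrib, Finset.sum_mul]
      apply Finset.sum_congr rfl
      intro i _
      have h1 : (p i : ZMod m) * n i = -1 := by linear_combination hn i
      have h3 : (∏ j ∈ univ.erase i, (p j : ZMod m)) * (p i : ZMod m)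
          = ∏ j, (p j : ZMod m) := Finset.prod_erase_mul _ _ (mem_univ i)
      calc ∏ j ∈ univ.erase i, (p j : ZMod m)
          = (∏ j ∈ univ.erase i, (p j : ZMod m)) * (-((p i : ZMod m) * n i)) := by
            rw [h1]; ring
        _ = -n i * ((∏ j ∈ univ.erase i, (p j : ZMod m)) * (p i : ZMod m)) := by ring
        _ = -n i * ∏ j, (p j : ZMod m) := by rw [h3]
    have h4 : (∏ i, (p i : ZMod m)) * (2 * (g : ZMod m) - 2 + r)
        = (∏ i, (p i : ZMod m)) * (-∑ i, n i) := by rw [hkey, h2]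
    have h5 := hPu.mul_left_cancel h4
    push_cast
    linear_combination h5
end

section
/- Let m ≥ 1, g ≥ 0, r ≥ 0, and let p_1, …, p_r ≥ 2 be coprime to m with (p_1⋯p_r)·((2g−2)+r) ≡ ∑_i (p_1⋯p_r)/p_i (mod m). Then the number of lifts of a Fuchsian group of signature (g : p_1, …, p_r) into G_m is exactly m^{2g}: each lift is determined by a free choice of the 2g levels of the hyperbolic generators A_i, B_i in ℤ/mℤ, while the levels of the elliptic generators are uniquely determined. -/
open Finset

/-- Let `m ≥ 1`, `g, r ≥ 0`, and `p i ≥ 2` coprime to `m` with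
`(p_1⋯p_r)·((2g−2)+r) ≡ ∑_i (p_1⋯p_r)/p_i (mod m)`.  Then the number of lifts of a Fuchsian
group of signature `(g : p_1, …, p_r)` into `G_m` is exactly `m^(2g)`: a lift is determined by
a free choice of the `2g` levels of the hyperbolic generators `A_i, B_i` in `ℤ/mℤ`, while the
levels `n j` of the elliptic generators are uniquely determined by `p_j·n_j + 1 ≡ 0 (mod m)`
and automatically satisfy the product relation `∑ n_j ≡ (2−2g) − r (mod m)`.  Accordingly a
lift is encoded by its tuple of levels, and the number of such tuples is `m^(2g)`. -/
theorem stmt_18 (m : ℕ) (hm : 1 ≤ m) (g r : ℕ) (p : Fin r → ℤ) (hp : ∀ i, 2 ≤ p i)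
    (hcop : ∀ i, IsCoprime (p i) (m : ℤ))
    (hlift : (∏ i, p i) * ((2 * (g : ℤ) - 2) + r) ≡
      ∑ i, ∏ j ∈ univ.erase i, p j [ZMOD (m : ℤ)]) :
    Nat.card {v : (Fin (2 * g) → ZMod m) × (Fin r → ZMod m) //
        (∀ j, (p j : ZMod m) * v.2 j + 1 = 0) ∧
        ∑ j, v.2 j = ((2 - 2 * (g : ℤ) - r : ℤ) : ZMod m)} = m ^ (2 * g) := by
  haveI : NeZero m := ⟨by omega⟩
  -- each p j is a unit in ZMod m
  have hu : ∀ j, IsUnit ((p j : ZMod m)) := by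
    intro j
    obtain ⟨u, v, huv⟩ := hcop j
    refine IsUnit.of_mul_eq_one (u : ZMod m) ?_
    have : ((u * p j + v * m : ℤ) : ZMod m) = ((1 : ℤ) : ZMod m) := by rw [huv]
    push_cast at this
    simp [ZMod.natCast_self] at this
    rw [mul_comm]
    simpa using this
  set n0 : Fin r → ZMod m := fun j => -(Ring.inverse ((p j : ZMod m))) with hn0
  have hinv : ∀ j, ((p j : ZMod m)) * Ring.inverse ((p j : ZMod m)) = 1 :=
    fun j => Ring.mul_inverse_cancel _ (hu j)
  have hcond : ∀ j, (p j : ZMod m) * n0 j + 1 = 0 := by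
    intro j
    simp only [hn0, mul_neg, hinv j]
    ring
  -- the product ∏ p is a unit
  have hP : IsUnit (∏ j, ((p j : ZMod m))) := by
    exact Finset.prod_induction _ IsUnit (fun a b => IsUnit.mul) isUnit_one (fun j _ => hu j)
  -- hlift in ZMod m
  have hlift' : ((∏ i, p i : ℤ) : ZMod m) * ((2 * (g : ℤ) - 2 + r : ℤ) : ZMod m) =
      ((∑ i, ∏ j ∈ univ.erase i, p j : ℤ) : ZMod m) := by
    rw [← Int.cast_mul]
    exact_mod_cast (ZMod.intCast_eq_intCast_iff _ _ m).mpr hlift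
  have hsum : ∑ j, n0 j = ((2 - 2 * (g : ℤ) - r : ℤ) : ZMod m) := by
    apply hP.mul_left_cancel
    rw [Finset.mul_sum]
    have key : ∀ j, (∏ k, ((p k : ZMod m))) * n0 j = -(∏ k ∈ univ.erase j, ((p k : ZMod m))) := by
      intro j
      rw [← Finset.mul_prod_erase univ _ (Finset.mem_univ j)]
      simp only [hn0, mul_neg]
      rw [mul_comm ((p j : ZMod m)), mul_assoc, hinv j, mul_one]
    simp_rw [key, Finset.sum_neg_distrib]
    have h2 : ((2 - 2 * (g : ℤ) - r : ℤ) : ZMod m) = -((2 * (g : ℤ) - 2 + r : ℤ) : ZMod m) := by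
      push_cast; ring
    rw [h2, mul_neg, neg_inj]
    push_cast at hlift' ⊢
    linear_combination -hlift'
  -- the equivalence
  have e : {v : (Fin (2 * g) → ZMod m) × (Fin r → ZMod m) //
        (∀ j, (p j : ZMod m) * v.2 j + 1 = 0) ∧
        ∑ j, v.2 j = ((2 - 2 * (g : ℤ) - r : ℤ) : ZMod m)} ≃ (Fin (2 * g) → ZMod m) := by
    refine ⟨fun v => v.1.1, fun w => ⟨(w, n0), hcond, hsum⟩, ?_, fun w => rfl⟩
    rintro ⟨⟨w, n⟩, h1, h2⟩
    have : n = n0 := by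
      funext j
      have ha := h1 j
      have hb := hcond j
      have : (p j : ZMod m) * n j = (p j : ZMod m) * n0 j := by
        have := ha.trans hb.symm
        linear_combination this
      exact (hu j).mul_left_cancel this
    simp [this]
  rw [Nat.card_congr e, Nat.card_fun]
  simp [Nat.card_zmod]
end
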